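/- Suppose n is even. Let M be a matching of maximum weight among all matchings of size n/3 in G, and let N be a matching of maximum weight among all matchings of size n/2 in G. Then w(N) ≥ w(M) + w(X_1) + w(Y_2). -/

import Mathlib

open Finset
open scoped Classical

namespace MW3PP

/-- A 3-path `xyz`: a path on three distinct vertices with middle vertex `y`. -/
structure P3 (V : Type*) where
  x : V
  y : V
  z : V
  hxy : x ≠ y
  hyz : y ≠ z
  hxz : x ≠ z

variable {V : Type*} [Fintype V] [DecidableEq V]

/-- The vertex set of a 3-path. -/
def P3.verts (p : P3 V) : Finset V := {p.x, p.y, p.z}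

/-- The two edges of a 3-path. -/
def P3.edges (p : P3 V) : Finset (Sym2 V) := {s(p.x, p.y), s(p.y, p.z)}

/-- The weight of a 3-path. -/
def P3.wt (w : Sym2 V → ℝ) (p : P3 V) : ℝ := w s(p.x, p.y) + w s(p.y, p.z)

/-- The total weight of a set of edges. -/
def ew (w : Sym2 V → ℝ) (F : Finset (Sym2 V)) : ℝ := ∑ e ∈ F, w e

/-- The total weight of a set of 3-paths. -/
def pw (w : Sym2 V → ℝ) (P : Finset (P3 V)) : ℝ := ∑ p ∈ P, p.wt w

/-- `∑_{xyz ∈ S} max (w (xy)) (w (yz))`. -/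
def maxSum (w : Sym2 V → ℝ) (S : Finset (P3 V)) : ℝ :=
  ∑ p ∈ S, max (w s(p.x, p.y)) (w s(p.y, p.z))

/-- A perfect 3-path packing: `n/3` pairwise vertex-disjoint 3-paths covering all vertices. -/
def IsPacking (P : Finset (P3 V)) : Prop :=
  P.card = Fintype.card V / 3 ∧
  (∀ p ∈ P, ∀ q ∈ P, p ≠ q → Disjoint p.verts q.verts) ∧
  (∀ v : V, ∃ p ∈ P, v ∈ p.verts)

/-- A maximum-weight perfect 3-path packing. -/
def IsMaxPacking (w : Sym2 V → ℝ) (P : Finset (P3 V)) : Prop :=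
  IsPacking P ∧ ∀ Q : Finset (P3 V), IsPacking Q → pw w Q ≤ pw w P

/-- A matching: a set of pairwise vertex-disjoint (non-loop) edges. -/
def IsMatching (M : Finset (Sym2 V)) : Prop :=
  (∀ e ∈ M, ¬ e.IsDiag) ∧
  ∀ e ∈ M, ∀ f ∈ M, e ≠ f → ∀ v : V, v ∈ e → v ∉ f

/-- A maximum-weight matching among all matchings of size `k`. -/
def IsMaxMatchingOfSize (w : Sym2 V → ℝ) (k : ℕ) (M : Finset (Sym2 V)) : Prop :=
  IsMatching M ∧ M.card = k ∧
  ∀ M' : Finset (Sym2 V), IsMatching M' → M'.card = k → ew w M' ≤ ew w M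

/-- `v ∈ V(M)` : vertex `v` is covered by the matching `M`. -/
def covered (M : Finset (Sym2 V)) (v : V) : Prop := ∃ e ∈ M, v ∈ e

/-- `e_u` : the edge of `M` containing `u` (junk value if there is none). -/
noncomputable def eMatch (M : Finset (Sym2 V)) (u : V) : Sym2 V :=
  if h : ∃ e ∈ M, u ∈ e then h.choose else s(u, u)

/-- The cost `c` of an edge with respect to a matching `M`:
`c(uv) = w(uv) - min (w (e_u)) (w (e_v))` if both endpoints are covered by `M`,
and `c(uv) = w(uv)` otherwise. -/
noncomputable def cost (w : Sym2 V → ℝ) (M : Finset (Sym2 V)) : Sym2 V → ℝ :=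
  Sym2.lift ⟨fun u v =>
    if covered M u ∧ covered M v then
      w s(u, v) - min (w (eMatch M u)) (w (eMatch M v))
    else w s(u, v), by
      intro u v
      dsimp only
      by_cases h : covered M u ∧ covered M v
      · rw [if_pos h, if_pos (show covered M v ∧ covered M u from ⟨h.2, h.1⟩),
          Sym2.eq_swap, min_comm]
      · rw [if_neg h, if_neg (show ¬(covered M v ∧ covered M u) from fun h' => h ⟨h'.2, h'.1⟩),
          Sym2.eq_swap]⟩

/-- The total cost of a set of edges. -/
noncomputable def cw (w : Sym2 V → ℝ) (M F : Finset (Sym2 V)) : ℝ := ∑ e ∈ F, cost w M e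

/-- The number of vertices of the 3-path `p` covered by `M`. -/
noncomputable def kcnt (M : Finset (Sym2 V)) (p : P3 V) : ℕ :=
  (p.verts.filter fun v => covered M v).card

/-- Exactly one of the two edges of `p` lies in `M`. -/
def exOne (M : Finset (Sym2 V)) (p : P3 V) : Prop :=
  (s(p.x, p.y) ∈ M ∧ s(p.y, p.z) ∉ M) ∨ (s(p.x, p.y) ∉ M ∧ s(p.y, p.z) ∈ M)

def cls1 (M : Finset (Sym2 V)) (p : P3 V) : Prop := kcnt M p = 0
def cls2 (M : Finset (Sym2 V)) (p : P3 V) : Prop := kcnt M p = 1 ∧ ¬ covered M p.y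
def cls3 (M : Finset (Sym2 V)) (p : P3 V) : Prop := kcnt M p = 1 ∧ covered M p.y
def cls4 (M : Finset (Sym2 V)) (p : P3 V) : Prop := kcnt M p = 2 ∧ ¬ covered M p.y
def cls5 (M : Finset (Sym2 V)) (p : P3 V) : Prop := kcnt M p = 2 ∧ covered M p.y ∧ exOne M p
def cls6 (M : Finset (Sym2 V)) (p : P3 V) : Prop :=
  kcnt M p = 2 ∧ covered M p.y ∧ s(p.x, p.y) ∉ M ∧ s(p.y, p.z) ∉ M
def cls7 (M : Finset (Sym2 V)) (p : P3 V) : Prop := kcnt M p = 3 ∧ exOne M p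
def cls8 (M : Finset (Sym2 V)) (p : P3 V) : Prop :=
  kcnt M p = 3 ∧ s(p.x, p.y) ∉ M ∧ s(p.y, p.z) ∉ M

/-- The subset of a set of 3-paths satisfying a predicate. -/
noncomputable def psel (P : Finset (P3 V)) (c : P3 V → Prop) : Finset (P3 V) := P.filter c

/-- The set of all edges of the 3-paths in `S`. -/
def Esub (S : Finset (P3 V)) : Finset (Sym2 V) := S.biUnion P3.edges

/-- The heaviest edge of a 3-path (the edge `xy` in case of a tie). -/
noncomputable def heavy (w : Sym2 V → ℝ) (p : P3 V) : Sym2 V :=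
  if w s(p.y, p.z) ≤ w s(p.x, p.y) then s(p.x, p.y) else s(p.y, p.z)

noncomputable def X1 (w : Sym2 V → ℝ) (P : Finset (P3 V)) (M : Finset (Sym2 V)) :
    Finset (Sym2 V) := (psel P (cls1 M)).image (heavy w)
noncomputable def X2 (P : Finset (P3 V)) (M : Finset (Sym2 V)) : Finset (Sym2 V) :=
  (psel P (cls2 M)).image fun p => if covered M p.x then s(p.x, p.y) else s(p.y, p.z)
noncomputable def X3 (w : Sym2 V → ℝ) (P : Finset (P3 V)) (M : Finset (Sym2 V)) :
    Finset (Sym2 V) := (psel P (cls3 M)).image (heavy w)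
noncomputable def X4 (w : Sym2 V → ℝ) (P : Finset (P3 V)) (M : Finset (Sym2 V)) :
    Finset (Sym2 V) := (psel P (cls4 M)).image (heavy w)
noncomputable def X5 (P : Finset (P3 V)) (M : Finset (Sym2 V)) : Finset (Sym2 V) :=
  (psel P (cls5 M)).image fun p => if s(p.x, p.y) ∈ M then s(p.y, p.z) else s(p.x, p.y)
noncomputable def X6 (P : Finset (P3 V)) (M : Finset (Sym2 V)) : Finset (Sym2 V) :=
  (psel P (cls6 M)).image fun p => if covered M p.x then s(p.y, p.z) else s(p.x, p.y)
noncomputable def X7 (P : Finset (P3 V)) (M : Finset (Sym2 V)) : Finset (Sym2 V) :=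
  (psel P (cls7 M)).image fun p => if s(p.x, p.y) ∈ M then s(p.y, p.z) else s(p.x, p.y)
noncomputable def X8 (w : Sym2 V → ℝ) (P : Finset (P3 V)) (M : Finset (Sym2 V)) :
    Finset (Sym2 V) := (psel P (cls8 M)).image (heavy w)

noncomputable def Y1 (w : Sym2 V → ℝ) (P : Finset (P3 V)) (M : Finset (Sym2 V)) :
    Finset (Sym2 V) := Esub (psel P (cls1 M)) \ X1 w P M
noncomputable def Y2 (P : Finset (P3 V)) (M : Finset (Sym2 V)) : Finset (Sym2 V) :=
  Esub (psel P (cls2 M)) \ X2 P M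
noncomputable def Y3 (w : Sym2 V → ℝ) (P : Finset (P3 V)) (M : Finset (Sym2 V)) :
    Finset (Sym2 V) := Esub (psel P (cls3 M)) \ X3 w P M
noncomputable def Y4 (w : Sym2 V → ℝ) (P : Finset (P3 V)) (M : Finset (Sym2 V)) :
    Finset (Sym2 V) := Esub (psel P (cls4 M)) \ X4 w P M
noncomputable def Y5 (P : Finset (P3 V)) (M : Finset (Sym2 V)) : Finset (Sym2 V) :=
  Esub (psel P (cls5 M)) \ X5 P M
noncomputable def Y6 (P : Finset (P3 V)) (M : Finset (Sym2 V)) : Finset (Sym2 V) :=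
  Esub (psel P (cls6 M)) \ X6 P M
noncomputable def Y7 (P : Finset (P3 V)) (M : Finset (Sym2 V)) : Finset (Sym2 V) :=
  Esub (psel P (cls7 M)) \ X7 P M
noncomputable def Y8 (w : Sym2 V → ℝ) (P : Finset (P3 V)) (M : Finset (Sym2 V)) :
    Finset (Sym2 V) := Esub (psel P (cls8 M)) \ X8 w P M

/-- An edge is a middle edge (w.r.t. `M`) if exactly one of its endpoints lies in `V(M)`. -/
def isMiddle (M : Finset (Sym2 V)) (e : Sym2 V) : Prop :=
  ∃ u v : V, e = s(u, v) ∧ covered M u ∧ ¬ covered M v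

/-- Two edges share a vertex. -/
def shares (e f : Sym2 V) : Prop := ∃ v, v ∈ e ∧ v ∈ f

/-- `g` is a middle edge of some 3-path in `S`. -/
def middleIn (M : Finset (Sym2 V)) (S : Finset (P3 V)) (g : Sym2 V) : Prop :=
  (∃ p ∈ S, g ∈ p.edges) ∧ isMiddle M g

/-- The 3-paths of `P` lying in classes 2, 3 or 4. -/
noncomputable def P234 (P : Finset (P3 V)) (M : Finset (Sym2 V)) : Finset (P3 V) :=
  psel P fun p => cls2 M p ∨ cls3 M p ∨ cls4 M p

/-- `M_1`: edges of `M` sharing a vertex with at least one middle edge of a 3-path of `P*_6`. -/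
noncomputable def Mset1 (P : Finset (P3 V)) (M : Finset (Sym2 V)) : Finset (Sym2 V) :=
  M.filter fun f => ∃ g, middleIn M (psel P (cls6 M)) g ∧ shares f g

/-- `M_2`: edges of `M` sharing a vertex with at least one middle edge, all middle edges met
belonging to 3-paths of `P*_2 ∪ P*_3 ∪ P*_4`. -/
noncomputable def Mset2 (P : Finset (P3 V)) (M : Finset (Sym2 V)) : Finset (Sym2 V) :=
  M.filter fun f =>
    (∃ g, middleIn M P g ∧ shares f g) ∧
    ∀ g, middleIn M P g → shares f g → middleIn M (P234 P M) g

/-- `M_3 = M ∩ E(P*_7)`. -/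
noncomputable def Mset3 (P : Finset (P3 V)) (M : Finset (Sym2 V)) : Finset (Sym2 V) :=
  M ∩ Esub (psel P (cls7 M))

/-- `M_4 = M ∩ E(P*_5)`. -/
noncomputable def Mset4 (P : Finset (P3 V)) (M : Finset (Sym2 V)) : Finset (Sym2 V) :=
  M ∩ Esub (psel P (cls5 M))

/-- The middle edges of 3-paths of `P*_6`. -/
noncomputable def mid6 (P : Finset (P3 V)) (M : Finset (Sym2 V)) : Finset (Sym2 V) :=
  (Esub (psel P (cls6 M))).filter (isMiddle M)

/-- `M'_1`: edges of `M_1` meeting exactly one middle edge of a 3-path of `P*_6` and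
no middle edge of a 3-path of `P*_2 ∪ P*_3 ∪ P*_4`. -/
noncomputable def Mset1' (P : Finset (P3 V)) (M : Finset (Sym2 V)) : Finset (Sym2 V) :=
  (Mset1 P M).filter fun f =>
    ((mid6 P M).filter fun g => shares f g).card = 1 ∧
    ∀ g, middleIn M (P234 P M) g → ¬ shares f g

/-- `M''_1`: edges of `M_1` meeting two middle edges of 3-paths of `P*_6`. -/
noncomputable def Mset1'' (P : Finset (P3 V)) (M : Finset (Sym2 V)) : Finset (Sym2 V) :=
  (Mset1 P M).filter fun f => ((mid6 P M).filter fun g => shares f g).card = 2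

/-- `M'''_1`: edges of `M_1` meeting exactly one middle edge of a 3-path of `P*_6` and
at least one middle edge of a 3-path of `P*_2 ∪ P*_3 ∪ P*_4`. -/
noncomputable def Mset1''' (P : Finset (P3 V)) (M : Finset (Sym2 V)) : Finset (Sym2 V) :=
  (Mset1 P M).filter fun f =>
    ((mid6 P M).filter fun g => shares f g).card = 1 ∧
    ∃ g, middleIn M (P234 P M) g ∧ shares f g

/-- Assumption on `P*`: for every 3-path `xyz ∈ P*` with `y ∉ V(M)` and `x, z ∈ V(M)`,
the vertices `x` and `z` lie in two distinct edges of `M`. -/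
def Ass (P : Finset (P3 V)) (M : Finset (Sym2 V)) : Prop :=
  ∀ p ∈ P, ¬ covered M p.y → covered M p.x → covered M p.z →
    ∃ e ∈ M, ∃ f ∈ M, p.x ∈ e ∧ p.z ∈ f ∧ e ≠ f

/-- An admissible edge w.r.t. `M`: either both endpoints are in `V(M)` and lie in two distinct
edges of `M`, or exactly one endpoint is in `V(M)`. -/
def goodEdge (M : Finset (Sym2 V)) (e : Sym2 V) : Prop :=
  (∃ u v : V, e = s(u, v) ∧ covered M u ∧ covered M v ∧ ∀ f ∈ M, ¬(u ∈ f ∧ v ∈ f)) ∨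
  (∃ u v : V, e = s(u, v) ∧ covered M u ∧ ¬ covered M v)


-- AUX START
lemma mem_verts_of_edges {p : P3 V} {e : Sym2 V} (he : e ∈ p.edges) {v : V} (hv : v ∈ e) :
    v ∈ p.verts := by
  simp only [P3.edges, mem_insert, mem_singleton] at he
  simp only [P3.verts, mem_insert, mem_singleton]
  rcases he with h | h <;> subst h <;> rcases Sym2.mem_iff.1 hv with h | h <;> tauto

lemma edges_nondiag {p : P3 V} {e : Sym2 V} (he : e ∈ p.edges) : ¬ e.IsDiag := by
  simp only [P3.edges, mem_insert, mem_singleton] at he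
  rcases he with h | h <;> subst h <;> simp [Sym2.isDiag_iff_proj_eq]
  · exact p.hxy
  · exact p.hyz

lemma heavy_mem_edges (w : Sym2 V → ℝ) (p : P3 V) : heavy w p ∈ p.edges := by
  unfold heavy P3.edges
  split <;> simp

lemma verts_mem_edge (p : P3 V) {v : V} (hv : v ∈ p.verts) :
    v ∈ s(p.x, p.y) ∨ v ∈ s(p.y, p.z) := by
  simp only [P3.verts, mem_insert, mem_singleton] at hv
  rcases hv with rfl | rfl | rfl <;> simp

lemma kcnt_zero {M : Finset (Sym2 V)} {p : P3 V} (h : kcnt M p = 0) :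
    ∀ v ∈ p.verts, ¬ covered M v := by
  intro v hv hc
  unfold kcnt at h
  rw [Finset.card_eq_zero] at h
  have : v ∈ p.verts.filter fun v => covered M v := mem_filter.2 ⟨hv, hc⟩
  rw [h] at this
  exact absurd this (notMem_empty v)

lemma cls2_not_both {M : Finset (Sym2 V)} {p : P3 V} (h2 : cls2 M p)
    (hx : covered M p.x) (hz : covered M p.z) : False := by
  have hsub : ({p.x, p.z} : Finset V) ⊆ p.verts.filter fun v => covered M v := by
    intro v hv
    rcases mem_insert.1 hv with rfl | hv
    · exact mem_filter.2 ⟨by simp [P3.verts], hx⟩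
    · rw [mem_singleton] at hv
      subst hv
      exact mem_filter.2 ⟨by simp [P3.verts], hz⟩
  have hcard := Finset.card_le_card hsub
  rw [Finset.card_insert_of_notMem (by simp [p.hxz]), Finset.card_singleton] at hcard
  have h1 : kcnt M p = 1 := h2.1
  unfold kcnt at h1
  omega

lemma X1_char {w : Sym2 V → ℝ} {P : Finset (P3 V)} {M : Finset (Sym2 V)} {e : Sym2 V}
    (he : e ∈ X1 w P M) :
    ∃ p ∈ P, cls1 M p ∧ e = heavy w p ∧ e ∈ p.edges ∧ ∀ v ∈ e, ¬ covered M v := by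
  simp only [X1, psel, mem_image, mem_filter] at he
  obtain ⟨p, ⟨hpP, hpc⟩, rfl⟩ := he
  exact ⟨p, hpP, hpc, rfl, heavy_mem_edges w p,
    fun v hv => kcnt_zero hpc v (mem_verts_of_edges (heavy_mem_edges w p) hv)⟩

lemma Y2_char {P : Finset (P3 V)} {M : Finset (Sym2 V)} {e : Sym2 V}
    (he : e ∈ Y2 P M) :
    ∃ p ∈ P, cls2 M p ∧ e ∈ p.edges ∧ ∀ v ∈ e, ¬ covered M v := by
  obtain ⟨heE, heX⟩ := mem_sdiff.1 he
  simp only [Esub, psel, mem_biUnion, mem_filter] at heE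
  obtain ⟨p, ⟨hpP, hpc⟩, hep⟩ := heE
  refine ⟨p, hpP, hpc, hep, ?_⟩
  have hX2 : (if covered M p.x then s(p.x, p.y) else s(p.y, p.z)) ∈ X2 P M := by
    simp only [X2, psel, mem_image, mem_filter]
    exact ⟨p, ⟨hpP, hpc⟩, rfl⟩
  have hy : ¬ covered M p.y := hpc.2
  simp only [P3.edges, mem_insert, mem_singleton] at hep
  rcases hep with rfl | rfl
  · have hx : ¬ covered M p.x := fun hx => heX (by rwa [if_pos hx] at hX2)
    intro v hv
    rcases Sym2.mem_iff.1 hv with rfl | rfl <;> assumption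
  · have hz : ¬ covered M p.z := by
      intro hz
      have hx : ¬ covered M p.x := fun hx => cls2_not_both hpc hx hz
      exact heX (by rwa [if_neg hx] at hX2)
    intro v hv
    rcases Sym2.mem_iff.1 hv with rfl | rfl <;> assumption

/-- Characterization of edges in `X1 ∪ Y2`. -/
lemma XY_char {w : Sym2 V → ℝ} {P : Finset (P3 V)} {M : Finset (Sym2 V)} {e : Sym2 V}
    (he : e ∈ X1 w P M ∪ Y2 P M) :
    ∃ p ∈ P, e ∈ p.edges ∧ (∀ v ∈ e, ¬ covered M v) := by
  rcases mem_union.1 he with h | h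
  · obtain ⟨p, hp, _, _, h1, h2⟩ := X1_char h
    exact ⟨p, hp, h1, h2⟩
  · obtain ⟨p, hp, _, h1, h2⟩ := Y2_char h
    exact ⟨p, hp, h1, h2⟩

lemma card_covered (M0 : Finset (Sym2 V)) (hM0 : IsMatching M0) :
    (univ.filter fun v => covered M0 v).card = 2 * M0.card := by
  have hrw : (univ.filter fun v => covered M0 v) = M0.biUnion fun e => univ.filter (· ∈ e) := by
    ext v
    rw [mem_filter, mem_biUnion]
    simp [covered]
  have h2 : ∀ e ∈ M0, (univ.filter (· ∈ e)).card = 2 := by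
    intro e he
    induction e using Sym2.inductionOn with
    | hf a b =>
      have hab : a ≠ b := by
        have := hM0.1 _ he
        simpa [Sym2.isDiag_iff_proj_eq] using this
      have : univ.filter (· ∈ s(a, b)) = {a, b} := by
        ext v
        simp [Sym2.mem_iff]
      rw [this, Finset.card_insert_of_notMem (by simp [hab]), Finset.card_singleton]
  rw [hrw, Finset.card_biUnion]
  · rw [Finset.sum_congr rfl h2, Finset.sum_const, smul_eq_mul, mul_comm]
  · intro e heM f hfM hef
    simp only [Function.onFun]
    rw [Finset.disjoint_left]
    intro v hv hv'
    exact hM0.2 e heM f hfM hef v (mem_filter.1 hv).2 (mem_filter.1 hv').2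

lemma matching_card_le (M0 : Finset (Sym2 V)) (hM0 : IsMatching M0) :
    2 * M0.card ≤ Fintype.card V := by
  rw [← card_covered M0 hM0]
  exact (Finset.card_filter_le _ _).trans (by simp)

lemma extend_matching (hEven : 2 ∣ Fintype.card V) :
    ∀ k (M0 : Finset (Sym2 V)), IsMatching M0 → M0.card + k = Fintype.card V / 2 →
      ∃ M', IsMatching M' ∧ M'.card = Fintype.card V / 2 ∧ M0 ⊆ M' := by
  intro k
  induction k with
  | zero =>
    intro M0 h1 h2
    exact ⟨M0, h1, by omega, subset_rfl⟩
  | succ k ih =>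
    intro M0 h1 h2
    have hdvd := Nat.div_mul_cancel hEven
    have hcov := card_covered M0 h1
    have hS : 2 ≤ (univ.filter fun v => ¬ covered M0 v).card := by
      have hsplit : (univ.filter fun v => covered M0 v).card +
          (univ.filter fun v => ¬ covered M0 v).card = (univ : Finset V).card :=
        Finset.card_filter_add_card_filter_not _
      rw [Finset.card_univ] at hsplit
      omega
    obtain ⟨a, ha, b, hb, hab⟩ := Finset.one_lt_card.1 hS
    have haU : ¬ covered M0 a := (mem_filter.1 ha).2
    have hbU : ¬ covered M0 b := (mem_filter.1 hb).2
    have hnew : s(a, b) ∉ M0 := fun h => haU ⟨_, h, by simp⟩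
    have hmatch : IsMatching (insert s(a, b) M0) := by
      constructor
      · intro e he
        rcases mem_insert.1 he with rfl | he
        · simpa [Sym2.isDiag_iff_proj_eq] using hab
        · exact h1.1 e he
      · intro e he f hf hef v hve hvf
        rcases mem_insert.1 he with rfl | he'
        · rcases mem_insert.1 hf with rfl | hf'
          · exact hef rfl
          · rcases Sym2.mem_iff.1 hve with rfl | rfl
            · exact haU ⟨f, hf', hvf⟩
            · exact hbU ⟨f, hf', hvf⟩
        · rcases mem_insert.1 hf with rfl | hf'
          · rcases Sym2.mem_iff.1 hvf with rfl | rfl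
            · exact haU ⟨e, he', hve⟩
            · exact hbU ⟨e, he', hve⟩
          · exact h1.2 e he' f hf' hef v hve hvf
    obtain ⟨M', hM'1, hM'2, hM'3⟩ := ih (insert s(a, b) M0) hmatch
      (by rw [Finset.card_insert_of_notMem hnew]; omega)
    exact ⟨M', hM'1, hM'2, (Finset.subset_insert _ _).trans hM'3⟩
-- AUX END

lemma y_mem_edges {p : P3 V} {e : Sym2 V} (he : e ∈ p.edges) : p.y ∈ e := by
  simp only [P3.edges, mem_insert, mem_singleton] at he
  rcases he with rfl | rfl <;> simp

theorem statement_7 (n : ℕ) (hn : Fintype.card V = n) (h3 : 3 ∣ n) (h2 : 2 ∣ n)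
    (w : Sym2 V → ℝ) (hw : ∀ e : Sym2 V, 0 ≤ w e)
    (M : Finset (Sym2 V)) (hM : IsMaxMatchingOfSize w (n / 3) M)
    (N : Finset (Sym2 V)) (hN : IsMaxMatchingOfSize w (n / 2) N)
    (Pstar : Finset (P3 V)) (hP : IsMaxPacking w Pstar) (hAss : Ass Pstar M) :
    ew w M + ew w (X1 w Pstar M) + ew w (Y2 Pstar M) ≤ ew w N := by
  classical
  obtain ⟨hMm, hMcard, hMmax⟩ := hM
  obtain ⟨hNm, hNcard, hNmax⟩ := hN
  obtain ⟨⟨hPcard, hPdisj, hPcov⟩, hPmax⟩ := hP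
  set B := X1 w Pstar M ∪ Y2 Pstar M with hB
  -- pairwise vertex disjoint within B
  have hBpair : ∀ e ∈ B, ∀ f ∈ B, e ≠ f → ∀ v : V, v ∈ e → v ∉ f := by
    intro e he f hf hef v hve hvf
    have hdis : ∀ (p : P3 V), p ∈ Pstar → ∀ (q : P3 V), q ∈ Pstar → p ≠ q →
        e ∈ p.edges → f ∈ q.edges → False := by
      intro p hp q hq hpq hep hfq
      exact Finset.disjoint_left.1 (hPdisj p hp q hq hpq)
        (mem_verts_of_edges hep hve) (mem_verts_of_edges hfq hvf)
    rcases mem_union.1 he with heX | heY <;> rcases mem_union.1 hf with hfX | hfY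
    · obtain ⟨p, hp, hpc, rfl, hep, hepU⟩ := X1_char heX
      obtain ⟨q, hq, hqc, rfl, hfq, hfqU⟩ := X1_char hfX
      by_cases hpq : p = q
      · exact hef (by rw [hpq])
      · exact hdis p hp q hq hpq hep hfq
    · obtain ⟨p, hp, hpc, rfl, hep, hepU⟩ := X1_char heX
      obtain ⟨q, hq, hqc, hfq, hfqU⟩ := Y2_char hfY
      by_cases hpq : p = q
      · subst hpq
        have h0 : kcnt M p = 0 := hpc
        have h1 : kcnt M p = 1 := hqc.1
        omega
      · exact hdis p hp q hq hpq hep hfq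
    · obtain ⟨p, hp, hpc, hep, hepU⟩ := Y2_char heY
      obtain ⟨q, hq, hqc, rfl, hfq, hfqU⟩ := X1_char hfX
      by_cases hpq : p = q
      · subst hpq
        have h0 : kcnt M p = 0 := hqc
        have h1 : kcnt M p = 1 := hpc.1
        omega
      · exact hdis p hp q hq hpq hep hfq
    · obtain ⟨p, hp, hpc, hep, hepU⟩ := Y2_char heY
      obtain ⟨q, hq, hqc, hfq, hfqU⟩ := Y2_char hfY
      by_cases hpq : p = q
      · subst hpq
        have h1 : kcnt M p = 1 := hpc.1
        have hpos : ∃ v0, v0 ∈ p.verts.filter fun v => covered M v := by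
          apply Finset.card_pos.1
          unfold kcnt at h1
          omega
        obtain ⟨v0, hv0⟩ := hpos
        obtain ⟨hv0v, hv0c⟩ := mem_filter.1 hv0
        simp only [P3.edges, mem_insert, mem_singleton] at hep hfq
        rcases hep with rfl | rfl <;> rcases hfq with rfl | rfl
        · exact hef rfl
        · rcases verts_mem_edge p hv0v with h | h
          · exact hepU v0 h hv0c
          · exact hfqU v0 h hv0c
        · rcases verts_mem_edge p hv0v with h | h
          · exact hfqU v0 h hv0c
          · exact hepU v0 h hv0c
        · exact hef rfl
      · exact hdis p hp q hq hpq hep hfq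
  -- M ∪ B is a matching
  have hAmatch : IsMatching (M ∪ B) := by
    constructor
    · intro e he
      rcases mem_union.1 he with he | he
      · exact hMm.1 e he
      · obtain ⟨p, _, hep, _⟩ := XY_char he
        exact edges_nondiag hep
    · intro e he f hf hef v hve hvf
      rcases mem_union.1 he with he | he <;> rcases mem_union.1 hf with hf | hf
      · exact hMm.2 e he f hf hef v hve hvf
      · obtain ⟨q, _, _, hfU⟩ := XY_char hf
        exact hfU v hvf ⟨e, he, hve⟩
      · obtain ⟨p, _, _, heU⟩ := XY_char he
        exact heU v hve ⟨f, hf, hvf⟩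
      · exact hBpair e he f hf hef v hve hvf
  -- disjointness between the three edge sets
  have hMB : Disjoint M B := by
    rw [Finset.disjoint_left]
    intro e heM heB
    obtain ⟨p, _, hep, heU⟩ := XY_char heB
    exact heU p.y (y_mem_edges hep) ⟨e, heM, y_mem_edges hep⟩
  have hXY : Disjoint (X1 w Pstar M) (Y2 Pstar M) := by
    rw [Finset.disjoint_left]
    intro e heX heY
    obtain ⟨p, hp, hpc, rfl, hep, _⟩ := X1_char heX
    obtain ⟨q, hq, hqc, hfq, _⟩ := Y2_char heY
    by_cases hpq : p = q
    · subst hpq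
      have h0 : kcnt M p = 0 := hpc
      have h1 : kcnt M p = 1 := hqc.1
      omega
    · exact Finset.disjoint_left.1 (hPdisj p hp q hq hpq)
        (mem_verts_of_edges hep (y_mem_edges hep))
        (mem_verts_of_edges hfq (y_mem_edges hep))
  -- extend to a matching of size n / 2
  have hEven : 2 ∣ Fintype.card V := by rw [hn]; exact h2
  have hdvd := Nat.div_mul_cancel hEven
  have hle := matching_card_le (M ∪ B) hAmatch
  obtain ⟨M', hM'1, hM'2, hM'3⟩ := extend_matching hEven
    (Fintype.card V / 2 - (M ∪ B).card) (M ∪ B) hAmatch (by omega)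
  -- weight comparison
  have hsum : ew w M + ew w (X1 w Pstar M) + ew w (Y2 Pstar M) = ew w (M ∪ B) := by
    rw [hB, ew, ew, ew, ew, Finset.sum_union hMB, Finset.sum_union hXY]
    ring
  have hstep : ew w (M ∪ B) ≤ ew w M' :=
    Finset.sum_le_sum_of_subset_of_nonneg hM'3 fun e _ _ => hw e
  have hfinal : ew w M' ≤ ew w N := hNmax M' hM'1 (by rw [hM'2, hn])
  linarith

end MW3PP
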